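/- Let (Ω, ℱ, P) be a probability space, B, K ≥ 1, S a measurable space, and for each b ∈ {1, …, B} let D_b : Ω → S be measurable and X_{b,1}, …, X_{b,K} : Ω → ℝⁿ be square-integrable random vectors. Assume: (1) the tuples Z_b := (D_b, X_{b,1}, …, X_{b,K}), b = 1, …, B, are independent and identically distributed; (2) for each b, with 𝒢_b := σ(D_b), almost everywhere E[X_{b,k} | 𝒢_b] = E[X_{b,1} | 𝒢_b] and E[‖X_{b,k}‖² | 𝒢_b] = E[‖X_{b,1}‖² | 𝒢_b] for all k, and E[⟨X_{b,j}, X_{b,k}⟩ | 𝒢_b] = ‖E[X_{b,1} | 𝒢_b]‖² for all j ≠ k. Let m = E[X_{1,1}], v = E[ E[‖X_{1,1}‖² | 𝒢₁] − ‖E[X_{1,1} | 𝒢₁]‖² ], and V = E[‖E[X_{1,1} | 𝒢₁] − m‖²]. Then E[‖(1/(BK)) Σ_{b=1}^B Σ_{k=1}^K X_{b,k} − m‖²] = v/(BK) + V/B. (This is Proposition 3 of the paper: the trace variance of the minibatched Gumbel-Rao Monte Carlo estimator decomposes as E[Var[∇_STGS | D]]/(BK) + Var[∇_GR]/B.) 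-/

import Mathlib

open MeasureTheory
open scoped RealInnerProductSpace

section Aux
variable {α : Type*} {E : Type*} [NormedAddCommGroup E] [InnerProductSpace ℝ E] [CompleteSpace E]

omit [CompleteSpace E] in
lemma integrable_inner_of_memL2 {m0 : MeasurableSpace α} {μ : Measure α} {f g : α → E}
    (hf : MemLp f 2 μ) (hg : MemLp g 2 μ) :
    Integrable (fun ω => ⟪f ω, g ω⟫) μ := by
  have h := L2.integrable_inner (𝕜 := ℝ) (hf.toLp f) (hg.toLp g)
  refine h.congr ?_
  filter_upwards [hf.coeFn_toLp, hg.coeFn_toLp] with ω h1 h2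
  rw [h1, h2]

omit [CompleteSpace E] in
lemma integrable_normsq_of_memL2 {m0 : MeasurableSpace α} {μ : Measure α} {f : α → E}
    (hf : MemLp f 2 μ) : Integrable (fun ω => ‖f ω‖ ^ 2) μ := by
  have := integrable_inner_of_memL2 hf hf
  simpa [real_inner_self_eq_norm_sq] using this

lemma memL2_condexp {m m0 : MeasurableSpace α} (hm : m ≤ m0) {μ : Measure α}
    [IsFiniteMeasure μ] {f : α → E} (hf : MemLp f 2 μ) :
    MemLp (μ[f|m]) 2 μ := by
  have hae : (condExpL2 E ℝ hm (hf.toLp f) : α → E) =ᵐ[μ] μ[f|m] := by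
    refine ae_eq_condExp_of_forall_setIntegral_eq hm (hf.integrable one_le_two) ?_ ?_ ?_
    · intro s _ hs
      exact integrableOn_condExpL2_of_measure_ne_top hm hs.ne _
    · intro s hs hμs
      rw [integral_condExpL2_eq hm (hf.toLp f) hs hμs.ne]
      exact setIntegral_congr_ae (hm s hs) (hf.coeFn_toLp.mono fun x hx _ => hx)
    · exact aestronglyMeasurable_condExpL2 hm _
  exact (Lp.memLp _).ae_eq hae

omit [CompleteSpace E] in
lemma integral_normsq_sum {m0 : MeasurableSpace α} {μ : Measure α} {ι : Type*} (s : Finset ι)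
    (f : ι → α → E) (h : ∀ i ∈ s, ∀ j ∈ s, Integrable (fun ω => ⟪f i ω, f j ω⟫) μ) :
    ∫ ω, ‖∑ i ∈ s, f i ω‖ ^ 2 ∂μ = ∑ i ∈ s, ∑ j ∈ s, ∫ ω, ⟪f i ω, f j ω⟫ ∂μ := by
  have hpt : ∀ ω, ‖∑ i ∈ s, f i ω‖ ^ 2 = ∑ i ∈ s, ∑ j ∈ s, ⟪f i ω, f j ω⟫ := by
    intro ω
    rw [← real_inner_self_eq_norm_sq, sum_inner]
    exact Finset.sum_congr rfl fun i _ => inner_sum _ _ _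
  simp_rw [hpt]
  rw [integral_finset_sum]
  · exact Finset.sum_congr rfl fun i hi => integral_finset_sum _ fun j hj => h i hi j hj
  · exact fun i hi => integrable_finset_sum _ fun j hj => h i hi j hj

lemma integral_comp_eq_of_map_eq {α β F : Type*} [MeasurableSpace α] [MeasurableSpace β]
    [NormedAddCommGroup F] [NormedSpace ℝ F] {μ : Measure α} {Z W : α → β}
    (hZ : AEMeasurable Z μ) (hW : AEMeasurable W μ)
    (h : Measure.map Z μ = Measure.map W μ) {g : β → F} (hg : StronglyMeasurable g) :
    ∫ ω, g (Z ω) ∂μ = ∫ ω, g (W ω) ∂μ := by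
  rw [← integral_map hZ hg.aestronglyMeasurable, h, integral_map hW hg.aestronglyMeasurable]
end Aux

/-- **Proposition 3.** The trace variance of the minibatched Gumbel-Rao Monte Carlo estimator
decomposes as `E[Var[∇_STGS | D]]/(BK) + Var[∇_GR]/B`: if the tuples
`Z_b = (D_b, X_{b,1}, …, X_{b,K})` are i.i.d. and, conditionally on `𝒢_b = σ(D_b)`, the
`X_{b,k}` share a conditional mean and second moment and are pairwise conditionally
uncorrelated, then
`E[‖(1/(BK)) Σ_b Σ_k X_{b,k} − m‖²] = v/(BK) + V/B`. -/
theorem minibatch_var_decomposition {Ω : Type*} {ℱ : MeasurableSpace Ω} (μ : Measure Ω)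
    [IsProbabilityMeasure μ] {S : Type*} [MeasurableSpace S]
    (n B K : ℕ) (hB : 1 ≤ B) (hK : 1 ≤ K)
    (D : Fin B → Ω → S) (hD : ∀ b, Measurable (D b))
    (X : Fin B → Fin K → Ω → EuclideanSpace ℝ (Fin n))
    (hX : ∀ b k, MemLp (X b k) 2 μ)
    -- the tuples `Z_b = (D_b, X_{b,1}, …, X_{b,K})` are independent …
    (hindep : ProbabilityTheory.iIndepFun
      (fun b : Fin B => fun ω => ((D b ω, fun k => X b k ω) :
        S × (Fin K → EuclideanSpace ℝ (Fin n)))) μ)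
    -- … and identically distributed
    (hid : ∀ b, Measure.map (fun ω => ((D b ω, fun k => X b k ω) :
        S × (Fin K → EuclideanSpace ℝ (Fin n)))) μ
      = Measure.map (fun ω => ((D ⟨0, hB⟩ ω, fun k => X ⟨0, hB⟩ k ω) :
        S × (Fin K → EuclideanSpace ℝ (Fin n)))) μ)
    -- common conditional mean given `𝒢_b = σ(D_b)`
    (hmean : ∀ b k, (μ[X b k|MeasurableSpace.comap (D b) inferInstance])
      =ᵐ[μ] (μ[X b ⟨0, hK⟩|MeasurableSpace.comap (D b) inferInstance]))
    -- common conditional second moment given `𝒢_b`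
    (hsecond : ∀ b k,
      (μ[fun ω => ‖X b k ω‖ ^ 2|MeasurableSpace.comap (D b) inferInstance])
        =ᵐ[μ] (μ[fun ω => ‖X b ⟨0, hK⟩ ω‖ ^ 2|MeasurableSpace.comap (D b) inferInstance]))
    -- conditional uncorrelatedness given `𝒢_b`
    (huncorr : ∀ b, ∀ j k, j ≠ k →
      (μ[fun ω => ⟪X b j ω, X b k ω⟫|MeasurableSpace.comap (D b) inferInstance])
        =ᵐ[μ] fun ω => ‖(μ[X b ⟨0, hK⟩|MeasurableSpace.comap (D b) inferInstance]) ω‖ ^ 2) :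
    ∫ ω, ‖((B : ℝ) * (K : ℝ))⁻¹ • ∑ b, ∑ k, X b k ω - ∫ ω', X ⟨0, hB⟩ ⟨0, hK⟩ ω' ∂μ‖ ^ 2 ∂μ
      = (∫ ω, ((μ[fun ω' => ‖X ⟨0, hB⟩ ⟨0, hK⟩ ω'‖ ^ 2|
              MeasurableSpace.comap (D ⟨0, hB⟩) inferInstance]) ω
            - ‖(μ[X ⟨0, hB⟩ ⟨0, hK⟩|MeasurableSpace.comap (D ⟨0, hB⟩) inferInstance]) ω‖ ^ 2) ∂μ)
          / ((B : ℝ) * (K : ℝ))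
        + (∫ ω, ‖(μ[X ⟨0, hB⟩ ⟨0, hK⟩|MeasurableSpace.comap (D ⟨0, hB⟩) inferInstance]) ω
            - ∫ ω', X ⟨0, hB⟩ ⟨0, hK⟩ ω' ∂μ‖ ^ 2 ∂μ) / (B : ℝ) := by
  classical
  set b₀ : Fin B := ⟨0, hB⟩ with hb₀def
  set k₀ : Fin K := ⟨0, hK⟩ with hk₀def
  have hKne : (K : ℝ) ≠ 0 := Nat.cast_ne_zero.mpr (by omega)
  have hBne : (B : ℝ) ≠ 0 := Nat.cast_ne_zero.mpr (by omega)
  have hle : ∀ b, MeasurableSpace.comap (D b) inferInstance ≤ ℱ := fun b => (hD b).comap_le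
  set m : EuclideanSpace ℝ (Fin n) := ∫ ω', X b₀ k₀ ω' ∂μ with hmdef
  set cX : Ω → EuclideanSpace ℝ (Fin n) :=
    μ[X b₀ k₀|MeasurableSpace.comap (D b₀) inferInstance] with hcXdef
  set s : ℝ := ∫ ω, ‖X b₀ k₀ ω‖ ^ 2 ∂μ with hsdef
  set t : ℝ := ∫ ω, ‖cX ω‖ ^ 2 ∂μ with htdef
  -- basic integrability
  have hXint : ∀ b k, Integrable (X b k) μ := fun b k => (hX b k).integrable one_le_two
  have hcXmem : MemLp cX 2 μ := memL2_condexp (hle b₀) (hX b₀ k₀)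
  have hcXint : Integrable cX μ := hcXmem.integrable one_le_two
  have hcXsq : Integrable (fun ω => ‖cX ω‖ ^ 2) μ := integrable_normsq_of_memL2 hcXmem
  -- the tuples
  set Z : Fin B → Ω → S × (Fin K → EuclideanSpace ℝ (Fin n)) :=
    fun b ω => (D b ω, fun k => X b k ω) with hZdef
  have hZae : ∀ b, AEMeasurable (Z b) μ := by
    intro b
    have h := fun k => (hX b k).aestronglyMeasurable.aemeasurable
    refine ((hD b).aemeasurable).prodMk
      ⟨fun ω k => (h k).mk _ ω, measurable_pi_lambda _ fun k => (h k).measurable_mk, ?_⟩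
    filter_upwards [ae_all_iff.mpr fun k : Fin K => (h k).ae_eq_mk] with ω hω
    funext k; exact hω k
  have hmap : ∀ b, Measure.map (Z b) μ = Measure.map (Z b₀) μ := fun b => hid b
  -- mean of each X b k is m
  have f1 : ∀ b k, ∫ ω, X b k ω ∂μ = m := by
    intro b k
    have h1 : ∫ ω, X b k ω ∂μ = ∫ ω, X b k₀ ω ∂μ := by
      calc ∫ ω, X b k ω ∂μ
          = ∫ ω, (μ[X b k|MeasurableSpace.comap (D b) inferInstance]) ω ∂μ :=
            (integral_condExp (hle b)).symm
        _ = ∫ ω, (μ[X b k₀|MeasurableSpace.comap (D b) inferInstance]) ω ∂μ :=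
            integral_congr_ae (hmean b k)
        _ = ∫ ω, X b k₀ ω ∂μ := integral_condExp (hle b)
    have h2 : ∫ ω, X b k₀ ω ∂μ = ∫ ω, X b₀ k₀ ω ∂μ := by
      have hg : StronglyMeasurable
          (fun p : S × (Fin K → EuclideanSpace ℝ (Fin n)) => p.2 k₀) :=
        ((measurable_pi_apply k₀).comp measurable_snd).stronglyMeasurable
      exact integral_comp_eq_of_map_eq (hZae b) (hZae b₀) (hmap b) hg
    rw [h1, h2, hmdef]
  -- the block means
  set Y : Fin B → Ω → EuclideanSpace ℝ (Fin n) :=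
    fun b ω => (K : ℝ)⁻¹ • ∑ k, X b k ω with hYdef
  set W : Fin B → Ω → EuclideanSpace ℝ (Fin n) := fun b ω => Y b ω - m with hWdef
  have hYmem : ∀ b, MemLp (Y b) 2 μ := by
    intro b
    have h := (memLp_finsetSum' Finset.univ fun k _ => hX b k).const_smul ((K : ℝ)⁻¹)
    exact h.ae_eq (Filter.Eventually.of_forall fun ω => by
      simp [Pi.smul_apply, Finset.sum_apply, hYdef])
  have hWmem : ∀ b, MemLp (W b) 2 μ := fun b => (hYmem b).sub (memLp_const m)
  have hWint : ∀ b, Integrable (W b) μ := fun b => (hWmem b).integrable one_le_two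
  have hIntY : ∀ b, ∫ ω, Y b ω ∂μ = m := by
    intro b
    have : ∫ ω, Y b ω ∂μ = (K : ℝ)⁻¹ • ∑ k, ∫ ω, X b k ω ∂μ := by
      rw [hYdef]
      simp only
      rw [integral_smul, integral_finset_sum _ fun k _ => hXint b k]
    rw [this]
    simp only [f1 b, Finset.sum_const, Finset.card_univ, Fintype.card_fin]
    rw [← Nat.cast_smul_eq_nsmul ℝ, smul_smul, inv_mul_cancel₀ hKne, one_smul]
  have hIntW : ∀ b, ∫ ω, W b ω ∂μ = 0 := by
    intro b
    rw [hWdef]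
    simp only
    rw [integral_sub ((hYmem b).integrable one_le_two) (integrable_const m), hIntY b,
      integral_const, probReal_univ, one_smul, sub_self]
  -- cross terms vanish
  have hcross : ∀ b b', b ≠ b' → ∫ ω, ⟪W b ω, W b' ω⟫ ∂μ = 0 := by
    intro b b' hne
    have φmeas : Measurable (fun p : S × (Fin K → EuclideanSpace ℝ (Fin n)) =>
        ((K : ℝ)⁻¹ • ∑ k, p.2 k) - m) := by
      refine Measurable.sub ?_ measurable_const
      fun_prop
    have hindWW : ProbabilityTheory.IndepFun (W b) (W b') μ :=
      (hindep.indepFun hne).comp φmeas φmeas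
    have hcoordmem : ∀ (c : Fin B) (i : Fin n), MemLp (fun ω => W c ω i) 2 μ := by
      intro c i
      exact (EuclideanSpace.proj (𝕜 := ℝ) i).comp_memLp' (hWmem c)
    have hcoordint : ∀ (c : Fin B) (i : Fin n), Integrable (fun ω => W c ω i) μ :=
      fun c i => (hcoordmem c i).integrable one_le_two
    have hcoordmean : ∀ (c : Fin B) (i : Fin n), ∫ ω, W c ω i ∂μ = 0 := by
      intro c i
      have := (EuclideanSpace.proj (𝕜 := ℝ) i).integral_comp_comm (hWint c)
      rw [hIntW c] at this
      simpa using this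
    have hpt : ∀ ω, ⟪W b ω, W b' ω⟫ = ∑ i, W b ω i * W b' ω i := by
      intro ω
      rw [PiLp.inner_apply]
      simp [RCLike.inner_apply, conj_trivial]
      exact Finset.sum_congr rfl fun i _ => mul_comm _ _
    have hintprod : ∀ i : Fin n, Integrable (fun ω => W b ω i * W b' ω i) μ := by
      intro i
      have := integrable_inner_of_memL2 (hcoordmem b i) (hcoordmem b' i)
      simpa [RCLike.inner_apply, conj_trivial, mul_comm] using this
    simp_rw [hpt]
    rw [integral_finset_sum _ fun i _ => hintprod i]
    refine Finset.sum_eq_zero fun i _ => ?_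
    have hindc : ProbabilityTheory.IndepFun (fun ω => W b ω i) (fun ω => W b' ω i) μ :=
      hindWW.comp (EuclideanSpace.proj (𝕜 := ℝ) i).continuous.measurable
        (EuclideanSpace.proj (𝕜 := ℝ) i).continuous.measurable
    have heq : ∫ ω, W b ω i * W b' ω i ∂μ
        = (∫ ω, W b ω i ∂μ) * ∫ ω, W b' ω i ∂μ :=
      hindc.integral_mul_eq_mul_integral (hcoordint b i).aestronglyMeasurable
        (hcoordint b' i).aestronglyMeasurable
    rw [heq, hcoordmean b i, zero_mul]
  -- blocks are identically distributed
  have hdiag : ∀ b, ∫ ω, ‖W b ω‖ ^ 2 ∂μ = ∫ ω, ‖W b₀ ω‖ ^ 2 ∂μ := by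
    intro b
    have φmeas : Measurable (fun p : S × (Fin K → EuclideanSpace ℝ (Fin n)) =>
        ((K : ℝ)⁻¹ • ∑ k, p.2 k) - m) := by
      refine Measurable.sub ?_ measurable_const
      fun_prop
    have hg : StronglyMeasurable (fun p : S × (Fin K → EuclideanSpace ℝ (Fin n)) =>
        ‖((K : ℝ)⁻¹ • ∑ k, p.2 k) - m‖ ^ 2) :=
      ((φmeas.norm).pow_const 2).stronglyMeasurable
    exact integral_comp_eq_of_map_eq (hZae b) (hZae b₀) (hmap b) hg
  -- integrability of pairwise inner products within the first block
  have hprod_int : ∀ j k : Fin K, Integrable (fun ω => ⟪X b₀ j ω - m, X b₀ k ω - m⟫) μ :=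
    fun j k => integrable_inner_of_memL2 ((hX b₀ j).sub (memLp_const m))
      ((hX b₀ k).sub (memLp_const m))
  have hXXint : ∀ j k : Fin K, Integrable (fun ω => ⟪X b₀ j ω, X b₀ k ω⟫) μ :=
    fun j k => integrable_inner_of_memL2 (hX b₀ j) (hX b₀ k)
  have hXmint : ∀ j : Fin K, Integrable (fun ω => ⟪X b₀ j ω, m⟫) μ :=
    fun j => integrable_inner_of_memL2 (hX b₀ j) (memLp_const m)
  have hmXint : ∀ j : Fin K, Integrable (fun ω => ⟪m, X b₀ j ω⟫) μ :=
    fun j => integrable_inner_of_memL2 (memLp_const m) (hX b₀ j)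
  have hmX : ∀ j : Fin K, ∫ ω, ⟪m, X b₀ j ω⟫ ∂μ = ‖m‖ ^ 2 := by
    intro j
    rw [integral_inner (hXint b₀ j) m, f1 b₀ j, real_inner_self_eq_norm_sq]
  have hXm : ∀ j : Fin K, ∫ ω, ⟪X b₀ j ω, m⟫ ∂μ = ‖m‖ ^ 2 := by
    intro j
    have : (fun ω => ⟪X b₀ j ω, m⟫) = fun ω => ⟪m, X b₀ j ω⟫ :=
      funext fun ω => real_inner_comm _ _
    rw [this, hmX j]
  -- expansion of centered inner products
  have e1 : ∀ j k : Fin K, ∫ ω, ⟪X b₀ j ω - m, X b₀ k ω - m⟫ ∂μ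
      = (∫ ω, ⟪X b₀ j ω, X b₀ k ω⟫ ∂μ) - ‖m‖ ^ 2 := by
    intro j k
    have hpt : ∀ ω, ⟪X b₀ j ω - m, X b₀ k ω - m⟫
        = ⟪X b₀ j ω, X b₀ k ω⟫ - ⟪X b₀ j ω, m⟫ - ⟪m, X b₀ k ω⟫ + ⟪m, m⟫ := by
      intro ω
      simp only [inner_sub_left, inner_sub_right]
      ring
    have h1 : Integrable (fun ω => ⟪X b₀ j ω, X b₀ k ω⟫ - ⟪X b₀ j ω, m⟫) μ :=
      (hXXint j k).sub (hXmint j)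
    have h2 : Integrable
        (fun ω => ⟪X b₀ j ω, X b₀ k ω⟫ - ⟪X b₀ j ω, m⟫ - ⟪m, X b₀ k ω⟫) μ :=
      h1.sub (hmXint k)
    simp_rw [hpt]
    rw [integral_add h2 (integrable_const _), integral_sub h1 (hmXint k),
      integral_sub (hXXint j k) (hXmint j), hXm j, hmX k, integral_const, probReal_univ, one_smul, real_inner_self_eq_norm_sq]
    ring
  -- the diagonal and off-diagonal values
  have ediag : ∀ k : Fin K, ∫ ω, ⟪X b₀ k ω, X b₀ k ω⟫ ∂μ = s := by
    intro k
    have h0 : (fun ω => ⟪X b₀ k ω, X b₀ k ω⟫) = fun ω => ‖X b₀ k ω‖ ^ 2 :=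
      funext fun ω => real_inner_self_eq_norm_sq _
    rw [h0]
    calc ∫ ω, ‖X b₀ k ω‖ ^ 2 ∂μ
        = ∫ ω, (μ[fun ω' => ‖X b₀ k ω'‖ ^ 2|
            MeasurableSpace.comap (D b₀) inferInstance]) ω ∂μ :=
          (integral_condExp (hle b₀)).symm
      _ = ∫ ω, (μ[fun ω' => ‖X b₀ k₀ ω'‖ ^ 2|
            MeasurableSpace.comap (D b₀) inferInstance]) ω ∂μ :=
          integral_congr_ae (hsecond b₀ k)
      _ = s := integral_condExp (hle b₀)
  have eoff : ∀ j k : Fin K, j ≠ k → ∫ ω, ⟪X b₀ j ω, X b₀ k ω⟫ ∂μ = t := by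
    intro j k hjk
    calc ∫ ω, ⟪X b₀ j ω, X b₀ k ω⟫ ∂μ
        = ∫ ω, (μ[fun ω' => ⟪X b₀ j ω', X b₀ k ω'⟫|
            MeasurableSpace.comap (D b₀) inferInstance]) ω ∂μ :=
          (integral_condExp (hle b₀)).symm
      _ = ∫ ω, ‖cX ω‖ ^ 2 ∂μ := integral_congr_ae (huncorr b₀ j k hjk)
      _ = t := rfl
  -- the double sum over the first block
  have hsum : ∑ j : Fin K, ∑ k : Fin K, ∫ ω, ⟪X b₀ j ω - m, X b₀ k ω - m⟫ ∂μ
      = (K : ℝ) * ((K : ℝ) * (t - ‖m‖ ^ 2) + ((s - ‖m‖ ^ 2) - (t - ‖m‖ ^ 2))) := by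
    have hterm : ∀ j k : Fin K, ∫ ω, ⟪X b₀ j ω - m, X b₀ k ω - m⟫ ∂μ
        = (t - ‖m‖ ^ 2) + (if j = k then (s - ‖m‖ ^ 2) - (t - ‖m‖ ^ 2) else 0) := by
      intro j k
      by_cases h : j = k
      · subst h; rw [e1, ediag]; simp
      · rw [e1, eoff j k h]; simp [h]
    simp_rw [hterm, Finset.sum_add_distrib, Finset.sum_const, Finset.card_univ,
      Fintype.card_fin, Finset.sum_ite_eq, Finset.mem_univ, if_true]
    rw [Finset.sum_const, Finset.card_univ, Fintype.card_fin, nsmul_eq_mul]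
    ring
  -- value of one block
  have hA : ∫ ω, ‖W b₀ ω‖ ^ 2 ∂μ = (s - t) / (K : ℝ) + (t - ‖m‖ ^ 2) := by
    have hW0 : ∀ ω, W b₀ ω = (K : ℝ)⁻¹ • ∑ k, (X b₀ k ω - m) := by
      intro ω
      rw [hWdef]
      simp only [Finset.sum_sub_distrib, smul_sub, hYdef]
      congr 1
      rw [Finset.sum_const, Finset.card_univ, Fintype.card_fin,
        ← Nat.cast_smul_eq_nsmul ℝ, smul_smul, inv_mul_cancel₀ hKne, one_smul]
    have hnorm : ∀ ω, ‖W b₀ ω‖ ^ 2 = ((K : ℝ)⁻¹) ^ 2 * ‖∑ k, (X b₀ k ω - m)‖ ^ 2 := by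
      intro ω
      rw [hW0 ω, norm_smul, mul_pow, Real.norm_eq_abs, abs_of_nonneg (by positivity)]
    simp_rw [hnorm]
    rw [integral_const_mul, integral_normsq_sum Finset.univ _
      (fun j _ k _ => hprod_int j k), hsum]
    field_simp
    ring
  -- assembling the global quantity
  have hWWint : ∀ b b' : Fin B, Integrable (fun ω => ⟪W b ω, W b' ω⟫) μ :=
    fun b b' => integrable_inner_of_memL2 (hWmem b) (hWmem b')
  have hLHSpt : ∀ ω, ((B : ℝ) * (K : ℝ))⁻¹ • ∑ b, ∑ k, X b k ω - m
      = (B : ℝ)⁻¹ • ∑ b, W b ω := by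
    intro ω
    rw [hWdef]
    simp only [Finset.sum_sub_distrib, smul_sub, hYdef]
    rw [← Finset.smul_sum, smul_smul, ← mul_inv]
    congr 1
    rw [Finset.sum_const, Finset.card_univ, Fintype.card_fin,
      ← Nat.cast_smul_eq_nsmul ℝ, smul_smul, inv_mul_cancel₀ hBne, one_smul]
  have hglobal : ∫ ω, ‖((B : ℝ) * (K : ℝ))⁻¹ • ∑ b, ∑ k, X b k ω - m‖ ^ 2 ∂μ
      = ((B : ℝ)⁻¹) ^ 2 * ((B : ℝ) * ∫ ω, ‖W b₀ ω‖ ^ 2 ∂μ) := by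
    have hnorm : ∀ ω, ‖((B : ℝ) * (K : ℝ))⁻¹ • ∑ b, ∑ k, X b k ω - m‖ ^ 2
        = ((B : ℝ)⁻¹) ^ 2 * ‖∑ b, W b ω‖ ^ 2 := by
      intro ω
      rw [hLHSpt ω, norm_smul, mul_pow, Real.norm_eq_abs, abs_of_nonneg (by positivity)]
    simp_rw [hnorm]
    rw [integral_const_mul, integral_normsq_sum Finset.univ _
      (fun b _ b' _ => hWWint b b')]
    congr 1
    have hterm : ∀ b b' : Fin B, ∫ ω, ⟪W b ω, W b' ω⟫ ∂μ
        = if b = b' then ∫ ω, ‖W b₀ ω‖ ^ 2 ∂μ else 0 := by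
      intro b b'
      by_cases h : b = b'
      · subst h
        simp only [if_true]
        rw [← hdiag b]
        exact integral_congr_ae (Filter.Eventually.of_forall fun ω =>
          real_inner_self_eq_norm_sq _)
      · simp only [h, if_false]
        exact hcross b b' h
    simp_rw [hterm, Finset.sum_ite_eq, Finset.mem_univ, if_true, Finset.sum_const,
      Finset.card_univ, Fintype.card_fin, nsmul_eq_mul]
  -- the two variance components
  have hv : ∫ ω, ((μ[fun ω' => ‖X b₀ k₀ ω'‖ ^ 2|
        MeasurableSpace.comap (D b₀) inferInstance]) ω - ‖cX ω‖ ^ 2) ∂μ = s - t := by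
    rw [integral_sub integrable_condExp hcXsq, integral_condExp (hle b₀), ← hsdef, ← htdef]
  have hVeq : ∫ ω, ‖cX ω - m‖ ^ 2 ∂μ = t - ‖m‖ ^ 2 := by
    have hcXm : ∫ ω, cX ω ∂μ = m := by
      rw [hcXdef, integral_condExp (hle b₀), ← hmdef]
    have hcXmint : Integrable (fun ω => ⟪cX ω, m⟫) μ :=
      integrable_inner_of_memL2 hcXmem (memLp_const m)
    have hpt : ∀ ω, ‖cX ω - m‖ ^ 2 = ‖cX ω‖ ^ 2 - 2 * ⟪cX ω, m⟫ + ‖m‖ ^ 2 :=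
      fun ω => norm_sub_sq_real _ _
    simp_rw [hpt]
    have hinnerint : ∫ ω, ⟪cX ω, m⟫ ∂μ = ‖m‖ ^ 2 := by
      have : (fun ω => ⟪cX ω, m⟫) = fun ω => ⟪m, cX ω⟫ :=
        funext fun ω => real_inner_comm _ _
      rw [this, integral_inner hcXint m, hcXm, real_inner_self_eq_norm_sq]
    have h1 : Integrable (fun ω => ‖cX ω‖ ^ 2 - 2 * ⟪cX ω, m⟫) μ :=
      hcXsq.sub (hcXmint.const_mul 2)
    rw [integral_add h1 (integrable_const _),
      integral_sub hcXsq (hcXmint.const_mul 2), integral_const_mul 2 _, hinnerint,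
      integral_const, probReal_univ, one_smul, ← htdef]
    ring
  rw [hglobal, hA, hv, hVeq]
  field_simp
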